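/- The classical value of the CHSH_n game is 1 − 1/(2n): for any functions f : {0,…,n−1} → Bool and g : {0,…,n−1} → Bool, the winning probability of the deterministic strategy (f,g) in CHSH_n is at most 1 − 1/(2n), and this bound is achieved by some pair (f,g). -/
import Mathlib


/-- Winning indicator of the deterministic strategy `(f,g)` in CHSH_n on
question pair `(a,b)`: win iff `f a ≠ g b` when `a = b = n-1`, and
`f a = g b` otherwise. -/
noncomputable def chshnDetWin (n : ℕ) (f g : Fin n → Bool) (a b : Fin n) : ℝ :=
  if a.val = n - 1 ∧ b.val = n - 1 then (if f a ≠ g b then 1 else 0)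
  else (if f a = g b then 1 else 0)

lemma chshn_succ_val (n : ℕ) [NeZero n] (hn : 2 ≤ n) (a : Fin n) :
    ((a + 1 : Fin n)).val = (a.val + 1) % n := by
  have : (1 : Fin n).val = 1 := by
    simp [Fin.val_one', Nat.mod_eq_of_lt (by omega : 1 < n)]
  rw [Fin.val_add, this]

lemma chshn_not_all (n : ℕ) [NeZero n] (hn : 2 ≤ n) (f g : Fin n → Bool)
    (hdiag : ∀ a : Fin n, a.val ≠ n - 1 → f a = g a)
    (hlast : f ⟨n-1, by omega⟩ ≠ g ⟨n-1, by omega⟩)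
    (hoff : ∀ a : Fin n, f a = g (a + 1)) : False := by
  have key : ∀ k, (h : k < n) → g ⟨k, h⟩ = g ⟨0, by omega⟩ := by
    intro k
    induction k with
    | zero => intro h; rfl
    | succ k ih =>
      intro h
      have hk : k < n := by omega
      have heq : (⟨k, hk⟩ + 1 : Fin n) = ⟨k + 1, h⟩ := by
        apply Fin.ext
        rw [chshn_succ_val n hn]
        simp [Nat.mod_eq_of_lt h]
      have h1 : g ⟨k + 1, h⟩ = f ⟨k, hk⟩ := by rw [← heq, ← hoff]
      have h2 : f ⟨k, hk⟩ = g ⟨k, hk⟩ := hdiag _ (by simp; omega)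
      rw [h1, h2, ih hk]
  have hL : ((⟨n-1, by omega⟩ : Fin n) + 1) = ⟨0, by omega⟩ := by
    apply Fin.ext
    rw [chshn_succ_val n hn]
    simp [Nat.sub_add_cancel (by omega : 1 ≤ n)]
  have : f ⟨n-1, by omega⟩ = g ⟨0, by omega⟩ := by rw [hoff, hL]
  exact hlast (by rw [this, ← key (n-1) (by omega)])

lemma chshn_sum_ite (n : ℕ) (hn : 2 ≤ n) (a0 : Fin n) :
    ∑ a : Fin n, (if a = a0 then (1:ℝ) else 2) = 2 * n - 1 := by
  have : ∀ a : Fin n, (if a = a0 then (1:ℝ) else 2) = 2 - (if a = a0 then 1 else 0) := by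
    intro a; split <;> norm_num
  rw [Finset.sum_congr rfl (fun a _ => this a), Finset.sum_sub_distrib]
  simp [Finset.sum_ite_eq', mul_comm]

lemma chshn_off_cond (n : ℕ) [NeZero n] (hn : 2 ≤ n) (a : Fin n) :
    ¬ (a.val = n - 1 ∧ ((a + 1 : Fin n)).val = n - 1) := by
  rintro ⟨h1, h2⟩
  rw [chshn_succ_val n hn, h1, Nat.sub_add_cancel (by omega)] at h2
  simp at h2
  omega

/-- The classical value of the CHSH_n game is `1 − 1/(2n)`: every deterministic
strategy wins with probability at most `1 − 1/(2n)` over the `2n` equally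
likely question pairs `(a,a)`, `(a,a+1)`, and some strategy achieves it. -/
theorem chshn_classical_value (n : ℕ) (hn : 2 ≤ n) [NeZero n] :
    (∀ f g : Fin n → Bool,
      (1 / (2 * n) : ℝ) * ∑ a : Fin n,
        (chshnDetWin n f g a a + chshnDetWin n f g a (a + 1)) ≤ 1 - 1 / (2 * n)) ∧
    (∃ f g : Fin n → Bool,
      (1 / (2 * n) : ℝ) * ∑ a : Fin n,
        (chshnDetWin n f g a a + chshnDetWin n f g a (a + 1)) = 1 - 1 / (2 * n)) := by
  have hnR : (0:ℝ) < 2 * n := by positivity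
  have hval : (1 / (2 * n) : ℝ) * (2 * n - 1) = 1 - 1 / (2 * n) := by
    field_simp
  constructor
  · intro f g
    -- find a failing question pair
    have hex : ∃ a0 : Fin n,
        ¬ ((if a0.val = n - 1 then f a0 ≠ g a0 else f a0 = g a0) ∧ f a0 = g (a0 + 1)) := by
      by_contra hall
      push_neg at hall
      apply chshn_not_all n hn f g
      · intro a ha
        have := (hall a).1
        rwa [if_neg ha] at this
      · have := (hall ⟨n-1, by omega⟩).1
        rwa [if_pos rfl] at this
      · intro a; exact (hall a).2
    obtain ⟨a0, ha0⟩ := hex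
    have hterm : chshnDetWin n f g a0 a0 + chshnDetWin n f g a0 (a0 + 1) ≤ 1 := by
      unfold chshnDetWin
      rw [if_neg (chshn_off_cond n hn a0)]
      by_cases hd : a0.val = n - 1
      · rw [if_pos ⟨hd, hd⟩]
        rw [if_pos hd] at ha0
        by_cases h2 : f a0 = g (a0 + 1)
        · have h1 : ¬ f a0 ≠ g a0 := fun h => ha0 ⟨h, h2⟩
          rw [if_neg h1, if_pos h2]; norm_num
        · rw [if_neg h2]; split <;> norm_num
      · rw [if_neg (by simp [hd] : ¬(a0.val = n - 1 ∧ a0.val = n - 1))]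
        rw [if_neg hd] at ha0
        by_cases h2 : f a0 = g (a0 + 1)
        · have h1 : ¬ f a0 = g a0 := fun h => ha0 ⟨h, h2⟩
          rw [if_neg h1, if_pos h2]; norm_num
        · rw [if_neg h2]; split <;> norm_num
    have hbound : ∑ a : Fin n,
        (chshnDetWin n f g a a + chshnDetWin n f g a (a + 1)) ≤ 2 * n - 1 := by
      rw [← chshn_sum_ite n hn a0]
      apply Finset.sum_le_sum
      intro a _
      by_cases ha : a = a0
      · rw [if_pos ha, ha]; exact hterm
      · rw [if_neg ha]
        have h1 : chshnDetWin n f g a a ≤ 1 := by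
          unfold chshnDetWin; split <;> split <;> norm_num
        have h2 : chshnDetWin n f g a (a + 1) ≤ 1 := by
          unfold chshnDetWin; split <;> split <;> norm_num
        linarith
    calc (1 / (2 * n) : ℝ) * ∑ a : Fin n,
        (chshnDetWin n f g a a + chshnDetWin n f g a (a + 1))
        ≤ (1 / (2 * n) : ℝ) * (2 * n - 1) := by
          apply mul_le_mul_of_nonneg_left hbound (by positivity)
      _ = 1 - 1 / (2 * n) := hval
  · refine ⟨fun _ => false, fun a => decide (a.val = n - 1), ?_⟩
    have hsum : ∑ a : Fin n,
        (chshnDetWin n (fun _ => false) (fun a => decide (a.val = n - 1)) a a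
          + chshnDetWin n (fun _ => false) (fun a => decide (a.val = n - 1)) a (a + 1))
        = 2 * n - 1 := by
      rw [← chshn_sum_ite n hn ⟨n-2, by omega⟩]
      apply Finset.sum_congr rfl
      intro a _
      have hdiag : chshnDetWin n (fun _ => false) (fun a => decide (a.val = n - 1)) a a
          = 1 := by
        unfold chshnDetWin
        by_cases hd : a.val = n - 1
        · rw [if_pos ⟨hd, hd⟩, if_pos (by simp [hd])]
        · rw [if_neg (by simp [hd]), if_pos (by simp [hd])]
      have hoffval : ((a + 1 : Fin n)).val = (a.val + 1) % n := chshn_succ_val n hn a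
      have hoff : chshnDetWin n (fun _ => false) (fun a => decide (a.val = n - 1)) a (a + 1)
          = if a = ⟨n-2, by omega⟩ then 0 else 1 := by
        unfold chshnDetWin
        rw [if_neg (chshn_off_cond n hn a)]
        by_cases he : a = ⟨n-2, by omega⟩
        · rw [if_pos he, if_neg]
          simp only [he, hoffval] at *
          simp [hoffval, he, Nat.mod_eq_of_lt (by omega : n - 2 + 1 < n), (by omega : n - 2 + 1 = n - 1)]
        · rw [if_neg he, if_pos]
          simp only [hoffval]
          have hne : (a.val + 1) % n ≠ n - 1 := by
            intro hc
            apply he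
            apply Fin.ext
            have := a.isLt
            rcases Nat.lt_or_ge (a.val + 1) n with h | h
            · rw [Nat.mod_eq_of_lt h] at hc; simpa using (by omega : a.val = n - 2)
            · have : a.val + 1 = n := by omega
              rw [this, Nat.mod_self] at hc; omega
          simp [hne]
      rw [hdiag, hoff]
      split <;> norm_num
    rw [hsum, hval]
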